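/- Let {D₁,…,Dₘ} be a nontrivial (v,m,k,λ)-SEDF in an abelian group G, let D = ⋃ᵢ Dᵢ, and let χ be a nonprincipal character of G with χ(D) ≠ 0. Then for each j, χ(D_j) = α·χ(D) where α = |χ(D_j)|²/(|χ(D_j)|² − λ), and α satisfies the quadratic equation α² − α − λ/|χ(D)|² = 0. -/

import Mathlib

open Finset

/-- `{D j}` is a `(v, m, k, lam)`-strong external difference family in the
abelian group `G`: mutually disjoint `k`-subsets whose defining group-ring
identity `D_j · (∑_{i≠j} D_i^{(-1)}) = lam (G - 1)` holds in `ℤ[G]`. -/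
def IsSEDF {G : Type} [CommGroup G] [Fintype G] [DecidableEq G]
    (v m k lam : ℕ) (D : Fin m → Finset G) : Prop :=
  Fintype.card G = v ∧ 2 ≤ m ∧ (∀ i, (D i).card = k) ∧
  (∀ i j, i ≠ j → Disjoint (D i) (D j)) ∧
  ∀ j, (∑ d ∈ D j, MonoidAlgebra.of ℤ G d) *
      (∑ i ∈ Finset.univ.erase j, ∑ d ∈ D i, MonoidAlgebra.of ℤ G d⁻¹)
    = (lam : ℤ) • ((∑ g : G, MonoidAlgebra.of ℤ G g) - 1)

/-- A nonprincipal character of a finite abelian group sums to zero. -/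
lemma sedf_sum_char_eq_zero {G : Type} [CommGroup G] [Fintype G]
    (χ : G →* ℂ) (hχ : χ ≠ 1) : ∑ g : G, χ g = 0 := by
  obtain ⟨a, ha⟩ : ∃ a, χ a ≠ 1 := by
    by_contra hcon
    push_neg at hcon
    exact hχ (MonoidHom.ext fun g => (hcon g).trans rfl)
  have h1 : χ a * ∑ g : G, χ g = ∑ g : G, χ g := by
    rw [Finset.mul_sum]
    simp_rw [← map_mul]
    exact Fintype.sum_bijective (a * ·) (Group.mulLeft_bijective a) _ _ fun g => rfl
  have h2 : (χ a - 1) * ∑ g : G, χ g = 0 := by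
    rw [sub_mul, one_mul, h1, sub_self]
  rcases mul_eq_zero.mp h2 with hc | hc
  · exact absurd (sub_eq_zero.mp hc) ha
  · exact hc

lemma sedf_char_abs_one {G : Type} [CommGroup G] [Fintype G]
    (χ : G →* ℂ) (d : G) : ‖χ d‖ = 1 := by
  have hpow : (χ d) ^ Fintype.card G = 1 := by
    rw [← map_pow, pow_card_eq_one, map_one]
  exact Complex.norm_eq_one_of_pow_eq_one hpow Fintype.card_ne_zero

theorem sedf_char_ratio {G : Type} [CommGroup G] [Fintype G]
    [DecidableEq G] {v m k lam : ℕ} (D : Fin m → Finset G)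
    (h : IsSEDF v m k lam D) (hk : 1 < k) (χ : G →* ℂ) (hχ : χ ≠ 1)
    (hχD : ∑ d ∈ Finset.univ.biUnion D, χ d ≠ 0) (j : Fin m) :
    let α : ℝ := ‖∑ d ∈ D j, χ d‖ ^ 2 /
      (‖∑ d ∈ D j, χ d‖ ^ 2 - lam)
    (∑ d ∈ D j, χ d) = (α : ℂ) * ∑ d ∈ Finset.univ.biUnion D, χ d ∧
      α ^ 2 - α - (lam : ℝ) / ‖∑ d ∈ Finset.univ.biUnion D, χ d‖ ^ 2 = 0 := by
  intro α
  obtain ⟨hv, hm, hcard, hdisj, hD⟩ := h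
  set Sj : ℂ := ∑ d ∈ D j, χ d with hSj
  set S : ℂ := ∑ d ∈ Finset.univ.biUnion D, χ d with hS
  set φ : MonoidAlgebra ℤ G →ₐ[ℤ] ℂ := MonoidAlgebra.lift ℤ ℂ G χ with hφdef
  have hφof : ∀ d : G, φ (MonoidAlgebra.of ℤ G d) = χ d := fun d =>
    MonoidAlgebra.lift_of χ d
  have hSsum : S = ∑ i : Fin m, ∑ d ∈ D i, χ d := by
    rw [hS]
    exact Finset.sum_biUnion (fun i _ i' _ hii' => hdisj i i' hii')
  -- apply φ to the defining identity
  have key := congrArg φ (hD j)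
  rw [map_mul, map_zsmul, map_sub, map_one, map_sum, map_sum] at key
  simp_rw [hφof, map_sum, hφof] at key
  rw [sedf_sum_char_eq_zero χ hχ] at key
  have hconj : ∀ d : G, χ d⁻¹ = (starRingEnd ℂ) (χ d) := fun d => by
    rw [map_inv, Complex.inv_eq_conj (sedf_char_abs_one χ d)]
  have herase : (∑ i ∈ Finset.univ.erase j, ∑ d ∈ D i, χ d⁻¹)
      = (starRingEnd ℂ) (S - Sj) := by
    simp_rw [hconj, ← map_sum]
    congr 1
    rw [Finset.sum_erase_eq_sub (Finset.mem_univ j), ← hSsum, ← hSj]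
  rw [herase, ← hSj] at key
  have key2 : Sj * (starRingEnd ℂ) S = ((‖Sj‖ ^ 2 : ℝ) : ℂ) - (lam : ℂ) := by
    rw [map_sub, mul_sub, Complex.mul_conj, ← Complex.sq_norm, zsmul_eq_mul] at key
    push_cast at key ⊢
    linear_combination key
  set t : ℝ := ‖Sj‖ ^ 2 with ht
  have hαdef : α = t / (t - (lam : ℝ)) := rfl
  have hconjS : (starRingEnd ℂ) S ≠ 0 := by simpa using hχD
  by_cases hc : t - (lam : ℝ) = 0
  · -- degenerate case: Sj = 0 and lam = 0
    have hz : ((t : ℝ) : ℂ) - (lam : ℂ) = 0 := by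
      exact_mod_cast congrArg Complex.ofReal hc
    have hSj0 : Sj = 0 := by
      have h0 : Sj * (starRingEnd ℂ) S = 0 := by rw [key2, hz]
      exact (mul_eq_zero.mp h0).resolve_right hconjS
    have ht0 : t = 0 := by rw [ht, hSj0]; simp
    have hlam0 : (lam : ℝ) = 0 := by linarith
    constructor
    · rw [hSj0, hαdef, ht0, hlam0]; simp
    · rw [hαdef, ht0, hlam0]; simp
  · -- main case
    have hc' : t - (lam : ℝ) ≠ 0 := hc
    have hnorm : t * ‖S‖ ^ 2 = (t - lam) ^ 2 := by
      have h2 : ‖Sj‖ * ‖S‖ = |t - (lam : ℝ)| := by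
        have h1 := congrArg (‖·‖) key2
        rw [norm_mul, Complex.norm_conj] at h1
        rw [h1, show ((t : ℝ) : ℂ) - (lam : ℂ) = (((t - (lam : ℝ)) : ℝ) : ℂ) by
          push_cast; ring, Complex.norm_real, Real.norm_eq_abs]
      have h3 := congrArg (· ^ 2) h2
      simp only [mul_pow, sq_abs] at h3
      rw [ht] at h3 ⊢
      exact h3
    have ht0 : t ≠ 0 := by
      intro h0
      apply hc
      have h4 : (t - (lam : ℝ)) ^ 2 = 0 := by rw [← hnorm, h0, zero_mul]
      exact (pow_eq_zero_iff two_ne_zero).mp h4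
    have hSabs : ‖S‖ ^ 2 = (t - lam) ^ 2 / t := by
      field_simp
      linear_combination hnorm
    have htC : ((t : ℝ) : ℂ) ≠ 0 := Complex.ofReal_ne_zero.mpr ht0
    have hcC : ((t : ℂ)) - (lam : ℂ) ≠ 0 := by
      intro hx; apply hc; exact_mod_cast hx
    constructor
    · -- Sj = α * S
      have hmulS : Sj * ((starRingEnd ℂ) S * S) = (((t : ℝ)) - (lam : ℂ)) * S := by
        rw [← mul_assoc, key2]
      rw [mul_comm ((starRingEnd ℂ) S) S, Complex.mul_conj, ← Complex.sq_norm, hSabs] at hmulS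
      have h5 : Sj * (((t : ℂ) - lam) ^ 2 / t) = ((t : ℂ) - lam) * S := by
        rw [← hmulS]; push_cast; ring
      have goalC : Sj = ((t : ℂ) / ((t : ℂ) - (lam : ℂ))) * S :=
        calc Sj = Sj * (((t : ℂ) - lam) ^ 2 / t) * ((t : ℂ) / ((t : ℂ) - lam) ^ 2) := by
              field_simp
            _ = ((t : ℂ) - lam) * S * ((t : ℂ) / ((t : ℂ) - lam) ^ 2) := by rw [h5]
            _ = ((t : ℂ) / ((t : ℂ) - lam)) * S := by field_simp
      rw [hαdef]
      push_cast
      exact goalC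
    · rw [hαdef, hSabs]
      field_simp
      ring
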